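/- The discrete Hamiltonian is conserved along solutions of the N-particle system: let G : ℝ → ℝ be an even function differentiable on (0,∞), and let q_i, p_i : ℝ → ℝⁿ (i = 1,…,N) be differentiable curves such that q_i(t) ≠ q_j(t) for all i ≠ j and all t, satisfying dq_i/dt = Σ_{j=1}^N G(‖q_i − q_j‖) p_j and dp_i/dt = −Σ_{j≠i} ⟨p_i, p_j⟩ G′(‖q_i − q_j‖)(q_i − q_j)/‖q_i − q_j‖. Then the function t ↦ H(q(t), p(t)) = (1/2) Σ_{i,j} ⟨p_i(t), p_j(t)⟩ G(‖q_i(t) − q_j(t)‖) is constant. -/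

import Mathlib

lemma hasDerivAt_norm_comp {E : Type*} [NormedAddCommGroup E] [InnerProductSpace ℝ E]
    {f : ℝ → E} {f' : E} {t : ℝ} (hf : HasDerivAt f f' t) (h0 : f t ≠ 0) :
    HasDerivAt (fun s => ‖f s‖) ((inner ℝ (f t) f' : ℝ) / ‖f t‖) t := by
  have hi : HasDerivAt (fun s => (inner ℝ (f s) (f s) : ℝ))
      ((inner ℝ (f t) f' : ℝ) + (inner ℝ f' (f t) : ℝ)) t := hf.inner ℝ hf
  have hn : ‖f t‖ ≠ 0 := norm_ne_zero_iff.mpr h0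
  have hne : (inner ℝ (f t) (f t) : ℝ) ≠ 0 := by
    simpa [real_inner_self_eq_norm_sq] using pow_ne_zero 2 hn
  have hs : HasDerivAt Real.sqrt (1 / (2 * Real.sqrt (inner ℝ (f t) (f t) : ℝ)))
      ((inner ℝ (f t) (f t) : ℝ)) := Real.hasDerivAt_sqrt hne
  have hc := hs.comp t hi
  have heq : (fun s => Real.sqrt ((inner ℝ (f s) (f s) : ℝ))) = fun s => ‖f s‖ := by
    funext s; rw [← norm_eq_sqrt_real_inner]
  rw [Function.comp_def, heq] at hc
  refine hc.congr_deriv ?_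
  rw [← norm_eq_sqrt_real_inner, real_inner_comm f' (f t)]
  field_simp
  ring

lemma triple_sum_zero {N : ℕ} (B : Fin N → Fin N → Fin N → ℝ) (g c : Fin N → Fin N → ℝ)
    (hg : ∀ i j, g i j = g j i) (hc : ∀ i j, c i j = c j i)
    (hB : ∀ i j k, B i j k = -B j i k) :
    ∑ i : Fin N, ∑ j : Fin N,
      (((-∑ k : Fin N, c j k * B j k i) + (-∑ k : Fin N, c i k * B i k j)) * g i j
        + c i j * ((∑ k : Fin N, g i k * B i j k) - ∑ k : Fin N, g j k * B i j k)) = 0 := by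
  have expand : ∀ i j : Fin N,
      (((-∑ k : Fin N, c j k * B j k i) + (-∑ k : Fin N, c i k * B i k j)) * g i j
        + c i j * ((∑ k : Fin N, g i k * B i j k) - ∑ k : Fin N, g j k * B i j k))
      = ∑ k : Fin N, (-(c j k * B j k i * g i j) + -(c i k * B i k j * g i j)
          + (c i j * (g i k * B i j k) - c i j * (g j k * B i j k))) := by
    intro i j
    rw [Finset.sum_add_distrib, Finset.sum_add_distrib, Finset.sum_sub_distrib,
      Finset.sum_neg_distrib, Finset.sum_neg_distrib, ← Finset.sum_mul, ← Finset.sum_mul,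
      ← Finset.mul_sum, ← Finset.mul_sum]
    ring
  simp only [expand]
  simp only [Finset.sum_add_distrib, Finset.sum_sub_distrib]
  have h12 : ∑ i : Fin N, ∑ j : Fin N, ∑ k : Fin N, (-(c j k * B j k i * g i j))
      = ∑ i : Fin N, ∑ j : Fin N, ∑ k : Fin N, (-(c i k * B i k j * g i j)) := by
    rw [Finset.sum_comm]
    refine Finset.sum_congr rfl fun i _ => Finset.sum_congr rfl fun j _ =>
      Finset.sum_congr rfl fun k _ => ?_
    rw [hg j i]
  have h23 : ∑ i : Fin N, ∑ j : Fin N, ∑ k : Fin N, (-(c i k * B i k j * g i j))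
      = -∑ i : Fin N, ∑ j : Fin N, ∑ k : Fin N, (c i j * (g i k * B i j k)) := by
    rw [← Finset.sum_neg_distrib]
    refine Finset.sum_congr rfl fun i _ => ?_
    rw [← Finset.sum_neg_distrib, Finset.sum_comm]
    refine Finset.sum_congr rfl fun j _ => ?_
    rw [← Finset.sum_neg_distrib]
    refine Finset.sum_congr rfl fun k _ => ?_
    ring
  have h43 : ∑ i : Fin N, ∑ j : Fin N, ∑ k : Fin N, (c i j * (g j k * B i j k))
      = -∑ i : Fin N, ∑ j : Fin N, ∑ k : Fin N, (c i j * (g i k * B i j k)) := by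
    rw [← Finset.sum_neg_distrib, Finset.sum_comm]
    refine Finset.sum_congr rfl fun i _ => ?_
    rw [← Finset.sum_neg_distrib]
    refine Finset.sum_congr rfl fun j _ => ?_
    rw [← Finset.sum_neg_distrib]
    refine Finset.sum_congr rfl fun k _ => ?_
    rw [hc j i, hB j i k]
    ring
  rw [h12, h23, h43]
  ring

/-- The discrete Hamiltonian of the `N`-particle system:
`H(q,p) = (1/2) Σ_{i,j} ⟨p_i, p_j⟩ G(‖q_i − q_j‖)`. -/
noncomputable def discreteHamiltonian (n N : ℕ) (G : ℝ → ℝ)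
    (q p : Fin N → EuclideanSpace ℝ (Fin n)) : ℝ :=
  (1 / 2 : ℝ) * ∑ i : Fin N, ∑ j : Fin N,
    (inner ℝ (p i) (p j) : ℝ) * G ‖q i - q j‖

/-- The discrete Hamiltonian is conserved along solutions of the `N`-particle system of
the EP equations (with an even kernel `G`, differentiable on `(0,∞)`, and particles that
never collide). -/
theorem discreteHamiltonian_conserved (n N : ℕ) (hn : 1 ≤ n) (hN : 1 ≤ N)
    (G : ℝ → ℝ) (hGeven : ∀ r : ℝ, G (-r) = G r)
    (hGdiff : DifferentiableOn ℝ G (Set.Ioi 0))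
    (q p : Fin N → ℝ → EuclideanSpace ℝ (Fin n))
    (hsep : ∀ i j, i ≠ j → ∀ t : ℝ, q i t ≠ q j t)
    (hq : ∀ i t, HasDerivAt (q i) (∑ j : Fin N, G ‖q i t - q j t‖ • p j t) t)
    (hp : ∀ i t, HasDerivAt (p i)
      (-∑ j ∈ Finset.univ.erase i,
        ((inner ℝ (p i t) (p j t) : ℝ) * deriv G ‖q i t - q j t‖ / ‖q i t - q j t‖) •
          (q i t - q j t)) t) :
    ∀ t s : ℝ,
      discreteHamiltonian n N G (fun i => q i t) (fun i => p i t) =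
      discreteHamiltonian n N G (fun i => q i s) (fun i => p i s) := by
  have key : ∀ t : ℝ, HasDerivAt
      (fun u => ∑ i : Fin N, ∑ j : Fin N, (inner ℝ (p i u) (p j u) : ℝ) * G ‖q i u - q j u‖)
      0 t := by
    intro t
    set Pd : Fin N → EuclideanSpace ℝ (Fin n) := fun i =>
      -∑ k ∈ Finset.univ.erase i,
        ((inner ℝ (p i t) (p k t) : ℝ) * deriv G ‖q i t - q k t‖ / ‖q i t - q k t‖) •
          (q i t - q k t) with hPd
    set Qd : Fin N → EuclideanSpace ℝ (Fin n) := fun i =>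
      ∑ j : Fin N, G ‖q i t - q j t‖ • p j t with hQd
    have hp' : ∀ i, HasDerivAt (p i) (Pd i) t := fun i => hp i t
    have hq' : ∀ i, HasDerivAt (q i) (Qd i) t := fun i => hq i t
    set D : Fin N → Fin N → ℝ := fun i j =>
      ((inner ℝ (p i t) (Pd j) : ℝ) + (inner ℝ (Pd i) (p j t) : ℝ)) * G ‖q i t - q j t‖
        + (inner ℝ (p i t) (p j t) : ℝ) *
          (deriv G ‖q i t - q j t‖ *
            ((inner ℝ (q i t - q j t) (Qd i - Qd j) : ℝ) / ‖q i t - q j t‖)) with hD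
    have hterm : ∀ i j : Fin N, HasDerivAt
        (fun u => (inner ℝ (p i u) (p j u) : ℝ) * G ‖q i u - q j u‖) (D i j) t := by
      intro i j
      have hA : HasDerivAt (fun u => (inner ℝ (p i u) (p j u) : ℝ))
          ((inner ℝ (p i t) (Pd j) : ℝ) + (inner ℝ (Pd i) (p j t) : ℝ)) t :=
        (hp' i).inner ℝ (hp' j)
      by_cases hij : i = j
      · subst hij
        have hfun : (fun u => (inner ℝ (p i u) (p i u) : ℝ) * G ‖q i u - q i u‖)
            = fun u => (inner ℝ (p i u) (p i u) : ℝ) * G ‖(0 : EuclideanSpace ℝ (Fin n))‖ := by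
          funext u; rw [sub_self]
        rw [hfun]
        have h := hA.mul_const (G ‖(0 : EuclideanSpace ℝ (Fin n))‖)
        refine h.congr_deriv ?_
        simp [hD, sub_self]
      · have hne : q i t - q j t ≠ 0 := sub_ne_zero.mpr (hsep i j hij t)
        have hrpos : (0 : ℝ) < ‖q i t - q j t‖ := norm_pos_iff.mpr hne
        have hsub : HasDerivAt (fun u => q i u - q j u) (Qd i - Qd j) t :=
          (hq' i).sub (hq' j)
        have hnorm : HasDerivAt (fun u => ‖q i u - q j u‖)
            ((inner ℝ (q i t - q j t) (Qd i - Qd j) : ℝ) / ‖q i t - q j t‖) t :=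
          hasDerivAt_norm_comp hsub hne
        have hG : HasDerivAt G (deriv G ‖q i t - q j t‖) ‖q i t - q j t‖ :=
          (hGdiff.differentiableAt (Ioi_mem_nhds hrpos)).hasDerivAt
        have hGn := hG.comp t hnorm
        rw [Function.comp_def] at hGn
        exact hA.mul hGn
    have hzero : ∑ i : Fin N, ∑ j : Fin N, D i j = 0 := by
      have halg := triple_sum_zero
        (fun a b m => (inner ℝ (q a t - q b t) (p m t) : ℝ))
        (fun a b => G ‖q a t - q b t‖)
        (fun a b => (inner ℝ (p a t) (p b t) : ℝ) * deriv G ‖q a t - q b t‖ / ‖q a t - q b t‖)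
        (fun i j => by
          show G ‖q i t - q j t‖ = G ‖q j t - q i t‖
          rw [norm_sub_rev])
        (fun i j => by
          show (inner ℝ (p i t) (p j t) : ℝ) * deriv G ‖q i t - q j t‖ / ‖q i t - q j t‖
            = (inner ℝ (p j t) (p i t) : ℝ) * deriv G ‖q j t - q i t‖ / ‖q j t - q i t‖
          rw [norm_sub_rev (q i t), real_inner_comm (p i t)])
        (fun i j k => by
          show (inner ℝ (q i t - q j t) (p k t) : ℝ) = -(inner ℝ (q j t - q i t) (p k t) : ℝ)
          rw [← inner_neg_left, neg_sub])
      rw [← halg]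
      refine Finset.sum_congr rfl fun i _ => Finset.sum_congr rfl fun j _ => ?_
      have h1 : (inner ℝ (p i t) (Pd j) : ℝ)
          = -∑ k : Fin N,
              ((inner ℝ (p j t) (p k t) : ℝ) * deriv G ‖q j t - q k t‖ / ‖q j t - q k t‖)
                * (inner ℝ (q j t - q k t) (p i t) : ℝ) := by
        simp only [hPd, inner_neg_right, inner_sum, real_inner_smul_right]
        rw [Finset.sum_erase _ (by simp)]
        congr 1
        exact Finset.sum_congr rfl fun k _ => by rw [real_inner_comm (p i t)]
      have h2 : (inner ℝ (Pd i) (p j t) : ℝ)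
          = -∑ k : Fin N,
              ((inner ℝ (p i t) (p k t) : ℝ) * deriv G ‖q i t - q k t‖ / ‖q i t - q k t‖)
                * (inner ℝ (q i t - q k t) (p j t) : ℝ) := by
        simp only [hPd, inner_neg_left, sum_inner, real_inner_smul_left]
        rw [Finset.sum_erase _ (by simp)]
      have h3 : (inner ℝ (q i t - q j t) (Qd i - Qd j) : ℝ)
          = (∑ k : Fin N, G ‖q i t - q k t‖ * (inner ℝ (q i t - q j t) (p k t) : ℝ))
            - ∑ k : Fin N, G ‖q j t - q k t‖ * (inner ℝ (q i t - q j t) (p k t) : ℝ) := by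
        simp only [hQd, inner_sub_right, inner_sum, real_inner_smul_right]
      simp only [hD, h1, h2, h3]
      ring
    have hsum : HasDerivAt
        (fun u => ∑ i : Fin N, ∑ j : Fin N, (inner ℝ (p i u) (p j u) : ℝ) * G ‖q i u - q j u‖)
        (∑ i : Fin N, ∑ j : Fin N, D i j) t :=
      HasDerivAt.fun_sum fun i _ => HasDerivAt.fun_sum fun j _ => hterm i j
    rw [hzero] at hsum
    exact hsum
  intro t s
  have hd : ∀ x : ℝ, HasDerivAt
      (fun u => discreteHamiltonian n N G (fun i => q i u) (fun i => p i u)) 0 x := by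
    intro x
    have h := (key x).const_mul (1 / 2 : ℝ)
    simpa [discreteHamiltonian] using h
  exact is_const_of_deriv_eq_zero (fun x => (hd x).differentiableAt)
    (fun x => (hd x).deriv) t s
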